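/- In an alternative ring R with idempotent e1 and e2 = 1 - e1 (working with the Peirce decomposition R = R11 ⊕ R12 ⊕ R21 ⊕ R22 where Rij = ei R ej), the square of any element of an off-diagonal Peirce component vanishes: if x ∈ Rij with i ≠ j, then x² = 0. -/

import Mathlib

/-- Peirce idempotents: `pe e1 0 = e1`, `pe e1 1 = 1 - e1`. -/
def pe {R : Type*} [NonAssocRing R] (e1 : R) : Fin 2 → R := ![e1, 1 - e1]

/-- Membership in the Peirce component `R_{ij} = e_i R e_j`. -/
def InP {R : Type*} [NonAssocRing R] (e1 : R) (i j : Fin 2) (x : R) : Prop :=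
  ∃ r : R, x = pe e1 i * r * pe e1 j

/-- Auxiliary: for any idempotent `e` in an alternative ring,
`(e * r * (1 - e))^2 = 0`. -/
theorem aux_offdiag_sq_zero {R : Type*} [NonAssocRing R]
    (hAlt1 : ∀ x y : R, x * x * y = x * (x * y))
    (hAlt2 : ∀ x y : R, y * x * x = y * (x * x))
    (e : R) (he : e * e = e) (r : R) :
    (e * r * (1 - e)) * (e * r * (1 - e)) = 0 := by
  -- linearized left alternative law
  have hL : ∀ a b y : R, a * b * y + b * a * y = a * (b * y) + b * (a * y) := by
    intro a b y
    have k := hAlt1 (a + b) y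
    simp only [add_mul, mul_add, hAlt1] at k
    rw [← sub_eq_zero] at k ⊢
    rw [← k]; abel
  -- linearized right alternative law
  have hR : ∀ y a b : R, y * a * b + y * b * a = y * (a * b) + y * (b * a) := by
    intro y a b
    have k := hAlt2 (a + b) y
    simp only [add_mul, mul_add, hAlt2] at k
    rw [← sub_eq_zero] at k ⊢
    rw [← k]; abel
  set f : R := 1 - e with hf
  have hef : e * f = 0 := by rw [hf, mul_sub, mul_one, he, sub_self]
  have hfe : f * e = 0 := by rw [hf, sub_mul, one_mul, he, sub_self]
  -- Step A : (e*r*e)*f = 0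
  have hA : e * r * e * f = 0 := by
    have h := hAlt2 e (e * r)
    rw [he] at h
    rw [hf, mul_sub, mul_one, h, sub_self]
  -- Step B : (e*r*f)*e = 0
  have hB : e * r * f * e = 0 := by
    have h := hR (e * r) f e
    rw [hfe, hef, mul_zero, hA, add_zero, add_zero] at h
    exact h
  -- Step C : e*(e*r*f) = e*r*f
  have hC : e * (e * r * f) = e * r * f := by
    have he2 : e * (e * r) = e * r := by rw [← hAlt1, he]
    have h := hL e (e * r) f
    rw [he2, hA, add_zero, hef, mul_zero, add_zero] at h
    exact h.symm
  set x : R := e * r * f with hxdef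
  -- e*(x*x) = x*x
  have hx2 : e * (x * x) = x * x := by
    have h := hAlt2 x e
    rw [hC] at h
    exact h.symm
  have h := hL e x x
  rw [hC, hB, zero_mul, add_zero, hx2] at h
  exact right_eq_add.mp h

/-- In a unital alternative ring with nontrivial idempotent e1, any
element of an off-diagonal Peirce component squares to zero. -/
theorem offdiag_peirce_sq_zero (R : Type*) [NonAssocRing R]
    (hAlt1 : ∀ x y : R, x * x * y = x * (x * y))
    (hAlt2 : ∀ x y : R, y * x * x = y * (x * x))
    (e1 : R) (he : e1 * e1 = e1) (he0 : e1 ≠ 0) (he1 : e1 ≠ 1)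
    (i j : Fin 2) (hij : i ≠ j) (x : R) (hx : InP e1 i j x) :
    x * x = 0 := by
  obtain ⟨r, hr⟩ := hx
  fin_cases i <;> fin_cases j <;> simp_all [pe, InP]
  · -- i = 0, j = 1 : x = e1 * r * (1 - e1)
    subst hr
    exact aux_offdiag_sq_zero hAlt1 hAlt2 e1 he r
  · -- i = 1, j = 0 : x = (1 - e1) * r * e1
    subst hr
    have he' : (1 - e1) * (1 - e1) = 1 - e1 := by
      rw [sub_mul, one_mul, mul_sub, mul_one, he]; abel
    have h := aux_offdiag_sq_zero hAlt1 hAlt2 (1 - e1) he' r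
    rwa [sub_sub_cancel] at h
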